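/- A commutative ring R is clean if and only if every Pierce stalk of R is a local ring, i.e., for every prime ideal 𝔭 of R the quotient ring R/I(𝔭) is local, where I(𝔭) is the ideal of R generated by the idempotents of R lying in 𝔭. -/

import Mathlib

/-- A ring is *clean* if every element is the sum of an idempotent and a unit. -/
def IsCleanRing (R : Type*) [Ring R] : Prop :=
  ∀ a : R, ∃ e u : R, IsIdempotentElem e ∧ IsUnit u ∧ a = e + u

/-- The ideal of `R` generated by the idempotents of `R` lying in `p`; the Pierce stalk of `R`
at the prime `p` is `R ⧸ pierceIdeal p`. -/
def pierceIdeal {R : Type*} [CommRing R] (p : Ideal R) : Ideal R :=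
  Ideal.span {e : R | IsIdempotentElem e ∧ e ∈ p}

section aux

variable {R : Type*} [CommRing R]

private lemma idem_sup {f g : R} (hf : IsIdempotentElem f) (hg : IsIdempotentElem g) :
    IsIdempotentElem (f + g - f * g) := by
  unfold IsIdempotentElem at *
  linear_combination (1 - 2*g + g*g) * hf + (1 - f) * hg

/-- Any element of the Pierce ideal is killed by `1 - f` for some idempotent `f ∈ p`. -/
private lemma pierce_exists_idem (p : Ideal R) {x : R} (hx : x ∈ pierceIdeal p) :
    ∃ f : R, IsIdempotentElem f ∧ f ∈ p ∧ x * (1 - f) = 0 := by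
  refine Submodule.span_induction (p := fun x _ => ∃ f : R,
      IsIdempotentElem f ∧ f ∈ p ∧ x * (1 - f) = 0) ?_ ?_ ?_ ?_ hx
  · rintro e ⟨he, hep⟩
    exact ⟨e, he, hep, by linear_combination -he.eq⟩
  · exact ⟨0, IsIdempotentElem.zero, p.zero_mem, by ring⟩
  · rintro x y _ _ ⟨f, hf, hfp, hxf⟩ ⟨g, hg, hgp, hyg⟩
    refine ⟨f + g - f * g, idem_sup hf hg, ?_, ?_⟩
    · exact p.sub_mem (p.add_mem hfp hgp) (p.mul_mem_right g hfp)
    · linear_combination (1-g) * hxf + (1-f) * hyg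
  · rintro r x _ ⟨f, hf, hfp, hxf⟩
    exact ⟨f, hf, hfp, by rw [smul_eq_mul]; linear_combination r * hxf⟩

/-- `a` has a clean decomposition on the piece cut out by the idempotent `f`. -/
private def CleanOn (a f : R) : Prop :=
  ∃ e b : R, e * e = e ∧ ((a - e) * b - 1) * f = 0

private lemma cleanOn_sup {a f g : R} (hf : IsIdempotentElem f) (hg : IsIdempotentElem g)
    (h1 : CleanOn a f) (h2 : CleanOn a g) : CleanOn a (f + g - f * g) := by
  obtain ⟨e1, b1, he1, h1⟩ := h1
  obtain ⟨e2, b2, he2, h2⟩ := h2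
  have hf' : f * f = f := hf
  have hg' : g * g = g := hg
  have hfp2 : f * (g * (1 - f)) = 0 := by linear_combination (-g) * hf'
  have hp2 : (g * (1 - f)) * (g * (1 - f)) = g * (1 - f) := by
    linear_combination (1-f)*(1-f)*hg' + g*hf'
  refine ⟨e1 * f + e2 * (g * (1 - f)), b1 * f + b2 * (g * (1 - f)), ?_, ?_⟩
  · linear_combination (e1*e1)*hf' + f*he1 + (2*e1*e2)*hfp2 + (e2*e2)*hp2 + (g*(1-f))*he2
  · have hab : (a - (e1 * f + e2 * (g * (1 - f)))) * (b1 * f + b2 * (g * (1 - f)))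
        = f + g * (1 - f) := by
      linear_combination h1 + (-(e1*b1))*hf' + (1-f)*h2 + (-(e2*b2))*hp2
        + (-(e1*b2)-(e2*b1))*hfp2
    have hF : (f + g - f * g) * (f + g - f * g) = f + g - f * g := idem_sup hf hg
    linear_combination (f + g - f*g) * hab + hF

end aux

/-- A commutative ring is clean iff all of its Pierce stalks are local rings. -/
theorem cleanRing_iff_pierceStalks_local {R : Type*} [CommRing R] :
    IsCleanRing R ↔ ∀ p : Ideal R, p.IsPrime → IsLocalRing (R ⧸ pierceIdeal p) := by
  constructor
  · intro hclean p hp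
    have hIp : pierceIdeal p ≤ p := Ideal.span_le.2 fun e he => he.2
    have hne : pierceIdeal p ≠ ⊤ := fun h => hp.ne_top (top_le_iff.1 (h ▸ hIp))
    have : Nontrivial (R ⧸ pierceIdeal p) := Ideal.Quotient.nontrivial_iff.2 hne
    refine IsLocalRing.of_isUnit_or_isUnit_one_sub_self fun x => ?_
    obtain ⟨a, rfl⟩ := Ideal.Quotient.mk_surjective x
    obtain ⟨e, u, he, hu, rfl⟩ := hclean a
    rcases hp.mem_or_mem (show e * (1 - e) ∈ p by
        rw [show e * (1 - e) = 0 by linear_combination -he.eq]; exact p.zero_mem) with h | h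
    · left
      have he0 : (Ideal.Quotient.mk (pierceIdeal p)) e = 0 :=
        Ideal.Quotient.eq_zero_iff_mem.2 (Ideal.subset_span ⟨he, h⟩)
      rw [map_add, he0, zero_add]
      exact hu.map _
    · right
      have he0 : (Ideal.Quotient.mk (pierceIdeal p)) (1 - e) = 0 :=
        Ideal.Quotient.eq_zero_iff_mem.2 (Ideal.subset_span ⟨he.one_sub, h⟩)
      have heq : (1 : R ⧸ pierceIdeal p) - (Ideal.Quotient.mk (pierceIdeal p)) (e + u)
          = (Ideal.Quotient.mk (pierceIdeal p)) (1 - e)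
            - (Ideal.Quotient.mk (pierceIdeal p)) u := by
        rw [map_sub, map_add, map_one]; ring
      rw [heq, he0, zero_sub]
      exact (hu.map _).neg
  · intro hloc a
    -- the set of idempotents on which `a` is clean
    set S : Set R := {g : R | IsIdempotentElem g ∧ CleanOn a g} with hS
    -- the span of S is everything
    have hspan : Ideal.span S = ⊤ := by
      by_contra h
      obtain ⟨m, hm, hle⟩ := Ideal.exists_le_maximal _ h
      have hmp : m.IsPrime := hm.isPrime
      have := hloc m hmp
      -- find a local clean decomposition modulo the Pierce ideal of m
      have key : ∃ e0 b : R, e0 * e0 = e0 ∧ (a - e0) * b - 1 ∈ pierceIdeal m := by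
        rcases IsLocalRing.isUnit_or_isUnit_one_sub_self
            ((Ideal.Quotient.mk (pierceIdeal m)) a) with hu | hu
        · obtain ⟨c, hc⟩ := hu.exists_right_inv
          obtain ⟨b, rfl⟩ := Ideal.Quotient.mk_surjective c
          refine ⟨0, b, by ring, ?_⟩
          rw [← Ideal.Quotient.eq_zero_iff_mem, map_sub, map_mul, map_sub, map_zero,
            map_one, sub_zero, hc, sub_self]
        · have : (1 : R ⧸ pierceIdeal m) - (Ideal.Quotient.mk _) a
              = (Ideal.Quotient.mk (pierceIdeal m)) (1 - a) := by simp
          rw [this] at hu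
          obtain ⟨c, hc⟩ := hu.exists_right_inv
          obtain ⟨b, rfl⟩ := Ideal.Quotient.mk_surjective c
          refine ⟨1, -b, by ring, ?_⟩
          rw [← Ideal.Quotient.eq_zero_iff_mem,
            show (a - 1) * -b - 1 = (1 - a) * b - 1 by ring,
            map_sub, map_mul, map_one, hc, sub_self]
      obtain ⟨e0, b, he0, hmem⟩ := key
      obtain ⟨f, hfi, hfm, hker⟩ := pierce_exists_idem m hmem
      -- 1 - f is in S hence in m; but f ∈ m too, so 1 ∈ m, contradiction
      have h1f : (1 - f) ∈ S := ⟨hfi.one_sub, e0, b, he0, hker⟩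
      have : (1 : R) ∈ m := by
        have := m.add_mem hfm (hle (Ideal.subset_span h1f))
        simpa using this
      exact hm.ne_top (Ideal.eq_top_of_isUnit_mem _ this isUnit_one)
    -- span induction: 1 is covered by a single idempotent with CleanOn
    have main : ∀ x : R, x ∈ Ideal.span S →
        ∃ F : R, IsIdempotentElem F ∧ CleanOn a F ∧ x * (1 - F) = 0 := by
      intro x hx
      refine Submodule.span_induction (p := fun x _ => ∃ F : R,
          IsIdempotentElem F ∧ CleanOn a F ∧ x * (1 - F) = 0) ?_ ?_ ?_ ?_ hx
      · rintro g ⟨hg, hcg⟩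
        exact ⟨g, hg, hcg, by linear_combination -hg.eq⟩
      · exact ⟨0, IsIdempotentElem.zero, ⟨0, 0, by ring, by ring⟩, by ring⟩
      · rintro x y _ _ ⟨f, hf, hcf, hxf⟩ ⟨g, hg, hcg, hyg⟩
        exact ⟨f + g - f * g, idem_sup hf hg, cleanOn_sup hf hg hcf hcg,
          by linear_combination (1-g) * hxf + (1-f) * hyg⟩
      · rintro r x _ ⟨f, hf, hcf, hxf⟩
        exact ⟨f, hf, hcf, by rw [smul_eq_mul]; linear_combination r * hxf⟩
    obtain ⟨F, hF, ⟨e, b, he, heb⟩, h1F⟩ := main 1 (hspan ▸ Submodule.mem_top)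
    have hF1 : F = 1 := by linear_combination -h1F
    rw [hF1, mul_one, sub_eq_zero] at heb
    exact ⟨e, a - e, he, IsUnit.of_mul_eq_one b heb, by ring⟩
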